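/- arXiv:0801.0579 — 5 statements merged into one kernel-verified Lean document; each statement's English description precedes it below -/
import Mathlib

section
/- If Alice has a winning strategy for the discrete bidding game G(a, b*) (Alice holds a chips, Bob holds b chips plus the tie-breaking advantage), then Alice also has a winning strategy for G(a*, b) (Alice holds a chips plus the tie-breaking advantage, Bob holds b chips). In other words, holding the tie-breaking advantage is never a disadvantage. -/
/-- A two-player game for discrete bidding play, modeled on a directed graph:
vertices are positions, `red` edges are Alice's legal moves, `blue` edges are
Bob's legal moves, and `aliceWinsAt`/`bobWinsAt` mark the winning (terminal)
positions of each player. -/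
structure BiddingGame (V : Type) where
  start : V
  red : V → V → Prop
  blue : V → V → Prop
  aliceWinsAt : V → Prop
  bobWinsAt : V → Prop

namespace BiddingGame

variable {V : Type}

/-- The game with the roles of Alice and Bob exchanged. -/
def dual (G : BiddingGame V) : BiddingGame V where
  start := G.start
  red := G.blue
  blue := G.red
  aliceWinsAt := G.bobWinsAt
  bobWinsAt := G.aliceWinsAt

/-- Alice has just won the bid at position `v` with chip counts `a`, `b` and
advantage flag `adv`: she decides who makes the next move.  If she moves
herself she picks a red edge; if she makes Bob move, Bob picks any blue edge.
`W` is the predicate "Alice can force a win from this configuration". -/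
def afterAlice (G : BiddingGame V) (W : V → ℕ → ℕ → Bool → Prop)
    (v : V) (a b : ℕ) (adv : Bool) : Prop :=
  (∃ w, G.red v w ∧ W w a b adv) ∨ (∀ w, G.blue v w → W w a b adv)

/-- Bob has just won the bid: he decides who makes the next move, and Alice
must be able to cope with both of his options. -/
def afterBob (G : BiddingGame V) (W : V → ℕ → ℕ → Bool → Prop)
    (v : V) (a b : ℕ) (adv : Bool) : Prop :=
  (∀ w, G.blue v w → W w a b adv) ∧ (∃ w, G.red v w ∧ W w a b adv)

/-- One round of bidding, from Alice's point of view.  Alice's bid `α ≤ a` may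
not depend on Bob's simultaneous bid `β ≤ b`.  The higher bidder pays the bid
to the opponent and decides who makes the next move; on tied bids the holder
of the tie-breaking advantage (`adv = true` iff Alice holds it) either
declares themselves the winner of the bid, giving the advantage to the
opponent, or declares the opponent the winner of the bid, keeping the
advantage. -/
def winStep (G : BiddingGame V) (W : V → ℕ → ℕ → Bool → Prop)
    (v : V) (a b : ℕ) (adv : Bool) : Prop :=
  G.aliceWinsAt v ∨
  ∃ α, α ≤ a ∧ ∀ β, β ≤ b →
    (β < α → afterAlice G W v (a - α) (b + α) adv) ∧
    (α < β → afterBob G W v (a + β) (b - β) adv) ∧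
    (β = α → adv = true →
      (afterAlice G W v (a - α) (b + α) false ∨
       afterBob G W v (a + α) (b - α) true)) ∧
    (β = α → adv = false →
      (afterBob G W v (a + α) (b - α) true ∧
       afterAlice G W v (a - α) (b + α) false))

/-- `AliceWins G v a b adv` : Alice has a winning strategy for the discrete
bidding game `G` from position `v`, where Alice holds `a` chips, Bob holds `b`
chips, and `adv = true` iff Alice holds the tie-breaking advantage.  This is
the least fixed point of the one-round operator `winStep`: the smallest
predicate containing the positions where Alice has already won and closed
under one round of bidding. -/
def AliceWins (G : BiddingGame V) (v : V) (a b : ℕ) (adv : Bool) : Prop :=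
  ∀ W : V → ℕ → ℕ → Bool → Prop,
    (∀ v' a' b' adv', winStep G W v' a' b' adv' → W v' a' b' adv') →
    W v a b adv

/-- `BobWins G v a b adv` : Bob has a winning strategy; here `a` is Alice's
chip count, `b` is Bob's chip count and `adv = true` iff Alice holds the
tie-breaking advantage. -/
def BobWins (G : BiddingGame V) (v : V) (a b : ℕ) (adv : Bool) : Prop :=
  AliceWins G.dual v b a (!adv)

end BiddingGame

open BiddingGame

lemma afterAlice_map {V : Type} (G : BiddingGame V)
    {W₁ W₂ : V → ℕ → ℕ → Bool → Prop} {a b : ℕ} {adv₁ adv₂ : Bool}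
    (h : ∀ w, W₁ w a b adv₁ → W₂ w a b adv₂) {v : V} :
    afterAlice G W₁ v a b adv₁ → afterAlice G W₂ v a b adv₂ := by
  rintro (⟨w, hr, hw⟩ | hall)
  · exact Or.inl ⟨w, hr, h w hw⟩
  · exact Or.inr fun w hb => h w (hall w hb)

lemma afterBob_map {V : Type} (G : BiddingGame V)
    {W₁ W₂ : V → ℕ → ℕ → Bool → Prop} {a b : ℕ} {adv₁ adv₂ : Bool}
    (h : ∀ w, W₁ w a b adv₁ → W₂ w a b adv₂) {v : V} :
    afterBob G W₁ v a b adv₁ → afterBob G W₂ v a b adv₂ := by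
  rintro ⟨hall, w, hr, hw⟩
  exact ⟨fun w hb => h w (hall w hb), w, hr, h w hw⟩

/-- **Lemma (the tie-breaking advantage is never a disadvantage).**
If Alice has a winning strategy for `G(a, b*)` (Alice holds `a` chips, Bob
holds `b` chips plus the tie-breaking advantage), then she also has a winning
strategy for `G(a*, b)` (Alice holds `a` chips plus the tie-breaking
advantage, Bob holds `b` chips). -/
theorem tie_breaking_advantage_is_an_advantage {V : Type} (G : BiddingGame V)
    (a b : ℕ) (h : AliceWins G G.start a b false) :
    AliceWins G G.start a b true := by
  intro W hW
  set W' : V → ℕ → ℕ → Bool → Prop :=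
    fun v a b adv => W v a b adv ∧ W v a b true with hW'def
  have key : ∀ v' a' b' adv', winStep G W' v' a' b' adv' → W' v' a' b' adv' := by
    intro v' a' b' adv' hstep
    rcases hstep with hterm | ⟨α, hα, hβ⟩
    · exact ⟨hW _ _ _ _ (Or.inl hterm), hW _ _ _ _ (Or.inl hterm)⟩
    constructor
    · -- W v' a' b' adv'
      apply hW
      right
      refine ⟨α, hα, fun β hb => ?_⟩
      obtain ⟨h1, h2, h3, h4⟩ := hβ β hb
      refine ⟨fun hlt => afterAlice_map G (fun w hw => hw.1) (h1 hlt),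
              fun hlt => afterBob_map G (fun w hw => hw.1) (h2 hlt),
              fun he ha => ?_, fun he ha => ?_⟩
      · rcases h3 he ha with hA | hB
        · exact Or.inl (afterAlice_map G (fun w hw => hw.1) hA)
        · exact Or.inr (afterBob_map G (fun w hw => hw.1) hB)
      · obtain ⟨hB, hA⟩ := h4 he ha
        exact ⟨afterBob_map G (fun w hw => hw.1) hB,
               afterAlice_map G (fun w hw => hw.1) hA⟩
    · -- W v' a' b' true
      apply hW
      right
      refine ⟨α, hα, fun β hb => ?_⟩
      obtain ⟨h1, h2, h3, h4⟩ := hβ β hb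
      refine ⟨fun hlt => afterAlice_map G (fun w hw => hw.2) (h1 hlt),
              fun hlt => afterBob_map G (fun w hw => hw.2) (h2 hlt),
              fun he _ => ?_, fun he hcontra => by simp at hcontra⟩
      cases adv' with
      | false =>
        obtain ⟨hB, _⟩ := h4 he rfl
        exact Or.inr (afterBob_map G (fun w hw => hw.2) hB)
      | true =>
        rcases h3 he rfl with hA | hB
        · exact Or.inl (afterAlice_map G (fun w hw => hw.1) hA)
        · exact Or.inr (afterBob_map G (fun w hw => hw.2) hB)
  exact (h W' key).2
end

section
/- If Alice has a winning strategy for the discrete bidding game G(a*, b+1), then Alice also has a winning strategy for G(a+1, b*). In other words, the tie-breaking advantage is worth less than an ordinary bidding chip: trading the tie-breaking advantage for one extra chip (with the opponent losing a chip and gaining the advantage) preserves Alice's win. -/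
open BiddingGame

section Aux

variable {V : Type} {G : BiddingGame V}

/-- Transfer `afterAlice` along a pointwise implication (possibly changing
the configuration data fed to the predicate). -/
theorem afterAlice_imp {W₁ W₂ : V → ℕ → ℕ → Bool → Prop} {v : V}
    {a b : ℕ} {adv : Bool} {a' b' : ℕ} {adv' : Bool}
    (hW : ∀ w, W₁ w a b adv → W₂ w a' b' adv')
    (h : afterAlice G W₁ v a b adv) : afterAlice G W₂ v a' b' adv' := by
  rcases h with ⟨w, hw, hWw⟩ | hall
  · exact Or.inl ⟨w, hw, hW w hWw⟩
  · exact Or.inr fun w hw => hW w (hall w hw)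

/-- Transfer `afterBob` along a pointwise implication. -/
theorem afterBob_imp {W₁ W₂ : V → ℕ → ℕ → Bool → Prop} {v : V}
    {a b : ℕ} {adv : Bool} {a' b' : ℕ} {adv' : Bool}
    (hW : ∀ w, W₁ w a b adv → W₂ w a' b' adv')
    (h : afterBob G W₁ v a b adv) : afterBob G W₂ v a' b' adv' := by
  obtain ⟨hall, w, hw, hWw⟩ := h
  exact ⟨fun w hw => hW w (hall w hw), w, hw, hW w hWw⟩

/-- `winStep` is monotone in the win predicate. -/
theorem winStep_mono {W₁ W₂ : V → ℕ → ℕ → Bool → Prop}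
    (hW : ∀ v a b adv, W₁ v a b adv → W₂ v a b adv) :
    ∀ v a b adv, winStep G W₁ v a b adv → winStep G W₂ v a b adv := by
  rintro v a b adv (h | ⟨α, hα, hβ⟩)
  · exact Or.inl h
  · refine Or.inr ⟨α, hα, fun β hb => ?_⟩
    obtain ⟨h1, h2, h3, h4⟩ := hβ β hb
    refine ⟨fun hlt => afterAlice_imp (fun w => hW _ _ _ _) (h1 hlt),
      fun hlt => afterBob_imp (fun w => hW _ _ _ _) (h2 hlt),
      fun he ha => ?_, fun he ha => ⟨afterBob_imp (fun w => hW _ _ _ _) (h4 he ha).1,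
        afterAlice_imp (fun w => hW _ _ _ _) (h4 he ha).2⟩⟩
    rcases h3 he ha with h | h
    · exact Or.inl (afterAlice_imp (fun w => hW _ _ _ _) h)
    · exact Or.inr (afterBob_imp (fun w => hW _ _ _ _) h)

/-- `AliceWins` is closed under one more round of bidding. -/
theorem aliceWins_closed {v : V} {a b : ℕ} {adv : Bool}
    (h : winStep G (AliceWins G) v a b adv) : AliceWins G v a b adv :=
  fun W hW => hW _ _ _ _ (winStep_mono (fun v' a' b' adv' h' => h' W hW) _ _ _ _ h)

/-- Having the tie-breaking advantage is at least as good as not having it. -/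
theorem aliceWins_true_of_false {v : V} {a b : ℕ}
    (h : AliceWins G v a b false) : AliceWins G v a b true := by
  have key := h (fun v a b adv =>
      AliceWins G v a b adv ∧ (adv = false → AliceWins G v a b true)) ?_
  · exact key.2 rfl
  intro v' a' b' adv' hw
  have h1 : AliceWins G v' a' b' adv' :=
    aliceWins_closed (winStep_mono (fun _ _ _ _ hp => hp.1) _ _ _ _ hw)
  refine ⟨h1, fun hadv => ?_⟩
  subst hadv
  apply aliceWins_closed
  rcases hw with hterm | ⟨α, hα, hβ⟩
  · exact Or.inl hterm
  refine Or.inr ⟨α, hα, fun β hb => ?_⟩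
  obtain ⟨k1, k2, k3, k4⟩ := hβ β hb
  refine ⟨fun hlt => afterAlice_imp (fun w hp => hp.2 rfl) (k1 hlt),
    fun hlt => afterBob_imp (fun w hp => hp.2 rfl) (k2 hlt),
    fun he _ => Or.inr (afterBob_imp (fun w hp => hp.1) (k4 he rfl).1),
    fun _ hcon => Bool.noConfusion hcon⟩

end Aux

/-- **Lemma (the tie-breaking advantage is worth less than a chip).**
If Alice has a winning strategy for `G(a*, b+1)`, then she also has a winning
strategy for `G(a+1, b*)`: trading the tie-breaking advantage for one extra
chip (with the opponent losing a chip and gaining the advantage) preserves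
Alice's win. -/
theorem chip_beats_tie_breaking_advantage {V : Type} (G : BiddingGame V)
    (a b : ℕ) (h : AliceWins G G.start a (b + 1) true) :
    AliceWins G G.start (a + 1) b false := by
  have key := h (fun v a b adv =>
      AliceWins G v a b adv ∧
        (adv = true → 1 ≤ b → AliceWins G v (a + 1) (b - 1) false)) ?_
  · simpa using key.2 rfl (Nat.le_add_left 1 b)
  intro v a' b' adv hw
  have h1 : AliceWins G v a' b' adv :=
    aliceWins_closed (winStep_mono (fun _ _ _ _ hp => hp.1) _ _ _ _ hw)
  refine ⟨h1, fun hadv hb => ?_⟩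
  subst hadv
  apply aliceWins_closed
  rcases hw with hterm | ⟨α, hα, hβ⟩
  · exact Or.inl hterm
  -- helper: if Alice wins the bid with a pretend bid of `α`, matching real win
  have hwinA : 1 ≤ α →
      afterAlice G (AliceWins G) v (a' + 1 - α) (b' - 1 + α) false := by
    intro hα1
    have := ((hβ 0 (Nat.zero_le _)).1 hα1)
    refine afterAlice_imp (fun w hp => ?_) this
    have := hp.2 rfl (by omega : 1 ≤ b' + α)
    have e1 : a' + 1 - α = a' - α + 1 := by omega
    have e2 : b' - 1 + α = b' + α - 1 := by omega
    rw [e1, e2]; exact this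
  -- helper: when Bob overbids a real bid of γ with β > γ ≥ α (pretend bid α)
  have hwinB : ∀ β, α < β → β ≤ b' - 1 →
      afterBob G (AliceWins G) v (a' + 1 + β) (b' - 1 - β) false := by
    intro β hαβ hβb
    have := ((hβ β (by omega)).2.1 hαβ)
    refine afterBob_imp (fun w hp => ?_) this
    have := hp.2 rfl (by omega : 1 ≤ b' - β)
    have e1 : a' + 1 + β = a' + β + 1 := by omega
    have e2 : b' - 1 - β = b' - β - 1 := by omega
    rw [e1, e2]; exact this
  by_cases hcase : α ≤ b' - 1 ∧ afterAlice G
      (fun v a b adv => AliceWins G v a b adv ∧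
        (adv = true → 1 ≤ b → AliceWins G v (a + 1) (b - 1) false))
      v (a' - α) (b' + α) false
  · -- Alice bids α + 1 in the real game
    obtain ⟨hαb, hAA⟩ := hcase
    refine Or.inr ⟨α + 1, by omega, fun β hβb => ?_⟩
    have hAA' : ∀ a₂ b₂ : ℕ, a₂ = a' - α → b₂ = b' + α →
        afterAlice G (AliceWins G) v a₂ b₂ false := by
      rintro _ _ rfl rfl
      exact afterAlice_imp (fun w hp => hp.1) hAA
    refine ⟨fun _ => hAA' _ _ (by omega) (by omega),
      fun hlt => hwinB β (by omega) hβb,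
      fun _ hcon => Bool.noConfusion hcon, fun he _ => ?_⟩
    subst he
    constructor
    · -- real tie at β = α + 1 : Bob may take the bid, giving Alice the advantage
      have := ((hβ (α + 1) (by omega)).2.1 (Nat.lt_succ_self α))
      refine afterBob_imp (fun w hp => ?_) this
      have := hp.2 rfl (by omega : 1 ≤ b' - (α + 1))
      have e1 : a' + 1 + (α + 1) = a' + (α + 1) + 1 := by omega
      have e2 : b' - 1 - (α + 1) = b' - (α + 1) - 1 := by omega
      rw [e1, e2]
      exact aliceWins_true_of_false this
    · exact hAA' _ _ (by omega) (by omega)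
  · -- Alice bids α in the real game
    refine Or.inr ⟨α, by omega, fun β hβb => ?_⟩
    refine ⟨fun hlt => hwinA (by omega),
      fun hlt => hwinB β hlt hβb,
      fun _ hcon => Bool.noConfusion hcon, fun he _ => ?_⟩
    rw [he] at hβb
    -- real tie at β = α : pretend strategy must have declined the tie
    have hd := ((hβ α (by omega)).2.2.1 rfl rfl)
    have hAB : afterBob G
        (fun v a b adv => AliceWins G v a b adv ∧
          (adv = true → 1 ≤ b → AliceWins G v (a + 1) (b - 1) false))
        v (a' + α) (b' - α) true := by
      rcases hd with hAA | hAB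
      · exact absurd ⟨by omega, hAA⟩ hcase
      · exact hAB
    constructor
    · refine afterBob_imp (fun w hp => ?_) hAB
      have := hp.2 rfl (by omega : 1 ≤ b' - α)
      have e1 : a' + 1 + α = a' + α + 1 := by omega
      have e2 : b' - 1 - α = b' - α - 1 := by omega
      rw [e1, e2]
      exact aliceWins_true_of_false this
    · rcases Nat.eq_zero_or_pos α with rfl | hpos
      · -- α = 0 : use Bob's forced-move component of the pretend `afterBob`
        refine Or.inr fun w hw => ?_
        have hp := hAB.1 w hw
        have := hp.2 rfl (by omega : 1 ≤ b' - 0)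
        have e1 : a' + 1 - 0 = a' - 0 + 1 := by omega
        have e2 : b' - 1 + 0 = b' - 0 - 1 := by omega
        rw [e1, e2]; exact this
      · exact hwinA hpos
end

section
/- In any discrete bidding game, both players have optimal strategies in which they use the tie-breaking advantage whenever the bids are tied at a nonzero value. Precisely: if a player has a strategy guaranteeing a given outcome (win, or at least a draw) from a given chip configuration, then that player has a strategy guaranteeing the same outcome in which, whenever they hold the tie-breaking advantage and the bids are tied at a nonzero amount, they declare themselves the winner of the bid. -/
namespace BiddingGame

variable {V : Type}

/-- One round of bidding, from Alice's point of view, with optional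
restrictions on how ties are resolved: if `forceP = true` then Alice (the
protagonist), whenever she holds the tie-breaking advantage and the bids are
tied at a nonzero amount, must declare herself the winner of the bid; if
`forceO = true` then the opponent is restricted in the same way. -/
def winStepT (G : BiddingGame V) (forceP forceO : Bool)
    (W : V → ℕ → ℕ → Bool → Prop) (v : V) (a b : ℕ) (adv : Bool) : Prop :=
  G.aliceWinsAt v ∨
  ∃ α, α ≤ a ∧ ∀ β, β ≤ b →
    (β < α → afterAlice G W v (a - α) (b + α) adv) ∧
    (α < β → afterBob G W v (a + β) (b - β) adv) ∧
    (β = α → adv = true →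
      (afterAlice G W v (a - α) (b + α) false ∨
       (¬ (forceP = true ∧ α ≠ 0) ∧ afterBob G W v (a + α) (b - α) true))) ∧
    (β = α → adv = false →
      (afterBob G W v (a + α) (b - α) true ∧
       (¬ (forceO = true ∧ α ≠ 0) → afterAlice G W v (a - α) (b + α) false)))

/-- `WinsT G forceP forceO v a b adv` : Alice has a strategy winning the
discrete bidding game `G` from position `v` (Alice holding `a` chips, Bob `b`
chips, `adv = true` iff Alice holds the tie-breaking advantage) subject to the
tie-resolution restrictions: if `forceP = true`, Alice's strategy must always
use the tie-breaking advantage on nonzero tied bids; if `forceO = true`, the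
opponent is restricted to strategies that always use the advantage on nonzero
tied bids.  `WinsT G false false` is the unrestricted notion of Alice having
a winning strategy. -/
def WinsT (G : BiddingGame V) (forceP forceO : Bool)
    (v : V) (a b : ℕ) (adv : Bool) : Prop :=
  ∀ W : V → ℕ → ℕ → Bool → Prop,
    (∀ v' a' b' adv', winStepT G forceP forceO W v' a' b' adv' → W v' a' b' adv') →
    W v a b adv

end BiddingGame

open BiddingGame

namespace BiddingGame

variable {V : Type}

lemma afterAlice_imp' (G : BiddingGame V) {W W' : V → ℕ → ℕ → Bool → Prop}
    {v : V} {a b a' b' : ℕ} {adv adv' : Bool}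
    (h : ∀ w, W w a b adv → W' w a' b' adv') :
    afterAlice G W v a b adv → afterAlice G W' v a' b' adv' := by
  rintro (⟨w, hr, hw⟩ | hall)
  · exact Or.inl ⟨w, hr, h w hw⟩
  · exact Or.inr fun w hb => h w (hall w hb)

lemma afterBob_imp' (G : BiddingGame V) {W W' : V → ℕ → ℕ → Bool → Prop}
    {v : V} {a b a' b' : ℕ} {adv adv' : Bool}
    (h : ∀ w, W w a b adv → W' w a' b' adv') :
    afterBob G W v a b adv → afterBob G W' v a' b' adv' := by
  rintro ⟨hall, w, hr, hw⟩
  exact ⟨fun w hb => h w (hall w hb), w, hr, h w hw⟩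

lemma winStepT_mono (G : BiddingGame V) {fP fO : Bool}
    {W W' : V → ℕ → ℕ → Bool → Prop}
    (hWW : ∀ v a b adv, W v a b adv → W' v a b adv)
    {v : V} {a b : ℕ} {adv : Bool} :
    winStepT G fP fO W v a b adv → winStepT G fP fO W' v a b adv := by
  rintro (h | ⟨α, hα, h⟩)
  · exact Or.inl h
  refine Or.inr ⟨α, hα, fun β hβ => ?_⟩
  obtain ⟨h1, h2, h3, h4⟩ := h β hβ
  refine ⟨fun hlt => afterAlice_imp' G (fun w => hWW w _ _ _) (h1 hlt),
          fun hlt => afterBob_imp' G (fun w => hWW w _ _ _) (h2 hlt),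
          fun he ha => ?_, fun he ha => ?_⟩
  · rcases h3 he ha with hA | ⟨hn, hB⟩
    · exact Or.inl (afterAlice_imp' G (fun w => hWW w _ _ _) hA)
    · exact Or.inr ⟨hn, afterBob_imp' G (fun w => hWW w _ _ _) hB⟩
  · obtain ⟨hB, hA⟩ := h4 he ha
    exact ⟨afterBob_imp' G (fun w => hWW w _ _ _) hB,
           fun hn => afterAlice_imp' G (fun w => hWW w _ _ _) (hA hn)⟩

lemma winsT_fold (G : BiddingGame V) {fP fO : Bool} {v : V} {a b : ℕ} {adv : Bool}
    (h : winStepT G fP fO (WinsT G fP fO) v a b adv) :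
    WinsT G fP fO v a b adv := by
  intro W hW
  exact hW _ _ _ _ (winStepT_mono G (fun v' a' b' adv' hw => hw W hW) h)

lemma winsT_mono (G : BiddingGame V) {fP fO : Bool} {v : V} {a b a' b' : ℕ}
    {adv : Bool} (haa : a ≤ a') (hbb : b' ≤ b)
    (h : WinsT G fP fO v a b adv) : WinsT G fP fO v a' b' adv := by
  have key := h (fun v a b adv => ∀ a' b', a ≤ a' → b' ≤ b → WinsT G fP fO v a' b' adv) ?_
  · exact key a' b' haa hbb
  intro v₀ a₀ b₀ adv₀ hstep a₁ b₁ ha₁ hb₁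
  apply winsT_fold
  rcases hstep with h0 | ⟨α, hα, hcl⟩
  · exact Or.inl h0
  refine Or.inr ⟨α, hα.trans ha₁, fun β hβ => ?_⟩
  obtain ⟨h1, h2, h3, h4⟩ := hcl β (hβ.trans hb₁)
  refine ⟨?_, ?_, ?_, ?_⟩
  · intro hlt
    exact afterAlice_imp' G (fun w hw => hw _ _ (by omega) (by omega)) (h1 hlt)
  · intro hlt
    exact afterBob_imp' G (fun w hw => hw _ _ (by omega) (by omega)) (h2 hlt)
  · intro he ha
    rcases h3 he ha with hA | ⟨hn, hB⟩
    · exact Or.inl (afterAlice_imp' G (fun w hw => hw _ _ (by omega) (by omega)) hA)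
    · exact Or.inr ⟨hn, afterBob_imp' G (fun w hw => hw _ _ (by omega) (by omega)) hB⟩
  · intro he ha
    obtain ⟨hB, hA⟩ := h4 he ha
    exact ⟨afterBob_imp' G (fun w hw => hw _ _ (by omega) (by omega)) hB,
           fun hn => afterAlice_imp' G (fun w hw => hw _ _ (by omega) (by omega)) (hA hn)⟩

/-- The tie-breaking advantage is worth at most one chip. -/
lemma winsT_star (G : BiddingGame V) {fP fO : Bool} {v : V} {a b : ℕ}
    (hb : 1 ≤ b) (h : WinsT G fP fO v a b true) :
    WinsT G fP fO v (a + 1) (b - 1) false := by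
  have key := h (fun v a b adv => WinsT G fP fO v a b adv ∧
      (adv = true → 1 ≤ b → WinsT G fP fO v (a + 1) (b - 1) false)) ?_
  · exact key.2 rfl hb
  intro v₀ a₀ b₀ adv₀ hstep
  constructor
  · exact winsT_fold G (winStepT_mono G (fun v' a' b' adv' hw => hw.1) hstep)
  intro hadv hb₀
  subst hadv
  apply winsT_fold
  rcases hstep with h0 | ⟨α, hα, hcl⟩
  · exact Or.inl h0
  by_cases hαb : α ≤ b₀
  · rcases (hcl α hαb).2.2.1 rfl rfl with hA | ⟨-, hB⟩
    · -- tie was resolved by using the advantage: bid α + 1 instead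
      refine Or.inr ⟨α + 1, by omega, fun β hβ => ?_⟩
      refine ⟨?_, ?_, ?_, ?_⟩
      · intro _
        exact afterAlice_imp' G
          (fun w hw => winsT_mono G (by omega) (by omega) hw.1) hA
      · intro hgt
        exact afterBob_imp' G
          (fun w hw => winsT_mono G (by omega) (by omega) (hw.2 rfl (by omega)))
          ((hcl β (by omega)).2.1 (by omega))
      · intro _ hfalse; exact absurd hfalse (by simp)
      · intro he _
        refine ⟨afterBob_imp' G
          (fun w hw => winsT_mono G (by omega) (by omega) hw.1)
          ((hcl (α + 1) (by omega)).2.1 (by omega)), fun _ => ?_⟩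
        exact afterAlice_imp' G
          (fun w hw => winsT_mono G (by omega) (by omega) hw.1) hA
    · -- tie was declined: bid α
      refine Or.inr ⟨α, by omega, fun β hβ => ?_⟩
      refine ⟨?_, ?_, ?_, ?_⟩
      · intro hlt
        exact afterAlice_imp' G
          (fun w hw => winsT_mono G (by omega) (by omega) (hw.2 rfl (by omega)))
          ((hcl β (by omega)).1 hlt)
      · intro hgt
        exact afterBob_imp' G
          (fun w hw => winsT_mono G (by omega) (by omega) (hw.2 rfl (by omega)))
          ((hcl β (by omega)).2.1 hgt)
      · intro _ hfalse; exact absurd hfalse (by simp)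
      · intro he _
        refine ⟨afterBob_imp' G
          (fun w hw => winsT_mono G (by omega) (by omega) hw.1) hB, fun _ => ?_⟩
        by_cases hα0 : α = 0
        · subst hα0
          obtain ⟨-, w, hr, hw⟩ := hB
          exact Or.inl ⟨w, hr, by
            have := hw.2 rfl (by omega)
            exact winsT_mono G (by omega) (by omega) this⟩
        · exact afterAlice_imp' G
            (fun w hw => winsT_mono G (by omega) (by omega) (hw.2 rfl (by omega)))
            ((hcl 0 (by omega)).1 (by omega))
  · -- α > b₀ : every bid of the opponent is smaller, ties cannot happen
    refine Or.inr ⟨α, by omega, fun β hβ => ?_⟩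
    refine ⟨?_, ?_, ?_, ?_⟩
    · intro _
      exact afterAlice_imp' G
        (fun w hw => winsT_mono G (by omega) (by omega) (hw.2 rfl (by omega)))
        ((hcl β (by omega)).1 (by omega))
    · intro hgt; exact absurd hgt (by omega)
    · intro _ hfalse; exact absurd hfalse (by simp)
    · intro he _; exact absurd he (by omega)

/-- Alice may as well always use the advantage on nonzero ties. -/
lemma winsT_forceP (G : BiddingGame V) {fO : Bool} {v : V} {a b : ℕ} {adv : Bool}
    (h : WinsT G false fO v a b adv) : WinsT G true fO v a b adv := by
  refine h (WinsT G true fO) ?_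
  intro v₀ a₀ b₀ adv₀ hstep
  apply winsT_fold
  rcases hstep with h0 | ⟨α, hα, hcl⟩
  · exact Or.inl h0
  rcases Bool.eq_false_or_eq_true adv₀ with hadv | hadv
  swap
  · -- no advantage: nothing changes
    subst hadv
    refine Or.inr ⟨α, hα, fun β hβ => ?_⟩
    obtain ⟨h1, h2, h3, h4⟩ := hcl β hβ
    exact ⟨h1, h2, fun _ hf => absurd hf (by simp), h4⟩
  subst hadv
  by_cases hα0 : α = 0
  · subst hα0
    refine Or.inr ⟨0, by omega, fun β hβ => ?_⟩
    obtain ⟨h1, h2, h3, h4⟩ := hcl β hβ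
    refine ⟨h1, h2, fun he ha => ?_, h4⟩
    rcases h3 he ha with hA | ⟨-, hB⟩
    · exact Or.inl hA
    · exact Or.inr ⟨fun hc => hc.2 rfl, hB⟩
  by_cases hαb : α ≤ b₀
  · rcases (hcl α hαb).2.2.1 rfl rfl with hA | ⟨-, hB⟩
    · refine Or.inr ⟨α, hα, fun β hβ => ?_⟩
      obtain ⟨h1, h2, h3, h4⟩ := hcl β hβ
      exact ⟨h1, h2, fun _ _ => Or.inl hA, h4⟩
    · -- tie was declined at a nonzero amount: bid α - 1 instead
      refine Or.inr ⟨α - 1, by omega, fun β hβ => ?_⟩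
      refine ⟨?_, ?_, ?_, ?_⟩
      · intro hlt
        exact afterAlice_imp' G
          (fun w hw => winsT_mono G (by omega) (by omega) hw)
          ((hcl β hβ).1 (by omega))
      · intro hgt
        rcases eq_or_lt_of_le (show α ≤ β by omega) with he | hlt
        · exact he ▸ hB
        · exact (hcl β hβ).2.1 hlt
      · intro he _
        refine Or.inl (afterAlice_imp' G
          (fun w hw => winsT_mono G (by omega) (by omega)
            (winsT_star G (by omega) hw))
          ((hcl 0 (by omega)).1 (by omega)))
      · intro _ hf; exact absurd hf (by simp)
  · refine Or.inr ⟨α, hα, fun β hβ => ?_⟩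
    obtain ⟨h1, h2, h3, h4⟩ := hcl β hβ
    exact ⟨h1, h2, fun he _ => absurd he (by omega), h4⟩

/-- If Alice wins against an opponent restricted to always use the advantage
on nonzero ties, she also wins against an unrestricted opponent. -/
lemma winsT_forceO (G : BiddingGame V) {fP : Bool} {v : V} {a b : ℕ} {adv : Bool}
    (h : WinsT G fP true v a b adv) : WinsT G fP false v a b adv := by
  refine h (WinsT G fP false) ?_
  intro v₀ a₀ b₀ adv₀ hstep
  apply winsT_fold
  rcases hstep with h0 | ⟨α, hα, hcl⟩
  · exact Or.inl h0
  refine Or.inr ⟨α, hα, fun β hβ => ?_⟩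
  obtain ⟨h1, h2, h3, h4⟩ := hcl β hβ
  refine ⟨h1, h2, h3, ?_⟩
  intro he ha
  obtain ⟨hB, hA⟩ := h4 he ha
  refine ⟨hB, fun _ => ?_⟩
  by_cases hα0 : α = 0
  · exact hA (fun hc => hc.2 hα0)
  · have := (hcl 0 (by omega)).1 (by omega)
    exact ha ▸ this

end BiddingGame



/-- **Proposition (always use the tie-breaking advantage on nonzero ties).**
Both players have optimal strategies in which they use the tie-breaking
advantage whenever the bids are nonzero and tied.  Precisely, for any
configuration (position `v`, Alice holding `a` chips, Bob holding `b` chips,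
`adv = true` iff Alice holds the tie-breaking advantage):

* if Alice has a winning strategy, she has one that always declares herself
  the winner of nonzero tied bids when she holds the advantage;
* if Alice has a strategy guaranteeing at least a draw (i.e. Bob has no
  winning strategy), then Bob still has no winning strategy when Alice is
  restricted to such tie-using strategies;
* and the two analogous statements hold for Bob (via the dual game, in which
  Bob is the protagonist, holding `b` chips and holding the advantage iff
  Alice does not). -/
theorem use_the_tie_breaking_advantage {V : Type} (G : BiddingGame V)
    (v : V) (a b : ℕ) (adv : Bool) :
    (WinsT G false false v a b adv → WinsT G true false v a b adv) ∧
    (¬ WinsT G.dual false false v b a (!adv) →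
      ¬ WinsT G.dual false true v b a (!adv)) ∧
    (WinsT G.dual false false v b a (!adv) →
      WinsT G.dual true false v b a (!adv)) ∧
    (¬ WinsT G false false v a b adv → ¬ WinsT G false true v a b adv) := by
  exact ⟨fun h => winsT_forceP G h,
    fun h hc => h (winsT_forceO G.dual hc),
    fun h => winsT_forceP G.dual h,
    fun h hc => h (winsT_forceO G hc)⟩
end

section
/- Let G be a finite discrete bidding game and let ε > 0. Then there exists N such that Bob has a stable strategy preventing Alice from winning G(a*, b) whenever a/(a+b) < R(G) − ε and b ≥ N. -/
namespace BiddingGame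

variable {V : Type}

/-- Real-valued (Richman) bidding, Alice just won the bid and decides who
moves; total bidding resources are normalized to `1` and `x` is Alice's
share. -/
def rAfterAlice (G : BiddingGame V) (W : V → ℝ → Prop) (v : V) (x : ℝ) : Prop :=
  (∃ w, G.red v w ∧ W w x) ∨ (∀ w, G.blue v w → W w x)

/-- Real-valued (Richman) bidding, Bob just won the bid and decides who
moves. -/
def rAfterBob (G : BiddingGame V) (W : V → ℝ → Prop) (v : V) (x : ℝ) : Prop :=
  (∀ w, G.blue v w → W w x) ∧ (∃ w, G.red v w ∧ W w x)

/-- One round of real-valued (Richman) bidding from Alice's point of view: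
Alice bids `t` with `0 ≤ t ≤ x`, Bob bids `s` with `0 ≤ s ≤ 1 - x`; the higher
bidder pays the bid to the opponent and decides who moves (here Alice must win
even when all tied bids are resolved in Bob's favor). -/
def rWinStep (G : BiddingGame V) (W : V → ℝ → Prop) (v : V) (x : ℝ) : Prop :=
  (G.aliceWinsAt v ∧ 0 ≤ x ∧ x ≤ 1) ∨
  (0 ≤ x ∧ x ≤ 1 ∧ ∃ t : ℝ, 0 ≤ t ∧ t ≤ x ∧ ∀ s : ℝ, 0 ≤ s → s ≤ 1 - x →
    (s < t → rAfterAlice G W v (x - t)) ∧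
    (t ≤ s → rAfterBob G W v (x + s)))

/-- `RWins G v x` : Alice has a winning strategy for the Richman (real-valued
bidding) game `G` from position `v` when her share of the total bidding
resources is `x` (the least fixed point of `rWinStep`). -/
def RWins (G : BiddingGame V) (v : V) (x : ℝ) : Prop :=
  ∀ W : V → ℝ → Prop, (∀ v' x', rWinStep G W v' x' → W v' x') → W v x

/-- `r` is the Richman value (critical threshold) of the game `G` played from
position `v`: Alice has a winning strategy for real-valued bidding whenever
her proportion of the total bidding resources exceeds `r`, and she has none
whenever it is less than `r`. -/
def IsRichmanValueAt (G : BiddingGame V) (v : V) (r : ℝ) : Prop :=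
  0 ≤ r ∧ r ≤ 1 ∧
  (∀ x : ℝ, r < x → x ≤ 1 → RWins G v x) ∧
  (∀ x : ℝ, 0 ≤ x → x < r → ¬ RWins G v x)

/-- Restrict Alice's moves to the *stable* ones: those minimizing the Richman
value `R` of the target among her legal moves.  Alice has a stable winning
strategy in `G` iff she has a winning strategy in `restrictRed G R`. -/
def restrictRed (G : BiddingGame V) (R : V → ℝ) : BiddingGame V :=
  { G with red := fun v w => G.red v w ∧ ∀ u, G.red v u → R w ≤ R u }

/-- Restrict Bob's moves to the *stable* ones: those maximizing the Richman
value `R` of the target among his legal moves. -/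
def restrictBlue (G : BiddingGame V) (R : V → ℝ) : BiddingGame V :=
  { G with blue := fun v w => G.blue v w ∧ ∀ u, G.blue v u → R u ≤ R w }

end BiddingGame

open BiddingGame

namespace StablePrevAux

variable {V : Type}

/-- Fixed point introduction for `RWins`. -/
lemma rwins_intro (G : BiddingGame V) {v : V} {x : ℝ}
    (h : rWinStep G (RWins G) v x) : RWins G v x := by
  intro W hW
  apply hW
  rcases h with h | ⟨hx0, hx1, t, ht0, htx, hts⟩
  · exact Or.inl h
  · refine Or.inr ⟨hx0, hx1, t, ht0, htx, fun s hs0 hs1 => ?_⟩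
    obtain ⟨h1, h2⟩ := hts s hs0 hs1
    constructor
    · intro hst
      rcases h1 hst with ⟨w, hw, hr⟩ | hall
      · exact Or.inl ⟨w, hw, hr W hW⟩
      · exact Or.inr fun w hw => hall w hw W hW
    · intro hts'
      obtain ⟨hb, w, hw, hr⟩ := h2 hts'
      exact ⟨fun u hu => hb u hu W hW, w, hw, hr W hW⟩

section ValueLemmas

variable (G : BiddingGame V) (R : V → ℝ) (hR : ∀ v, IsRichmanValueAt G v (R v))

include hR

lemma R_nonneg (v : V) : 0 ≤ R v := (hR v).1

lemma R_le_one (v : V) : R v ≤ 1 := (hR v).2.1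

/-- At an Alice-winning terminal position the Richman value is `0`. -/
lemma R_zero_of_aliceWinsAt {v : V} (h : G.aliceWinsAt v) : R v = 0 := by
  by_contra hne
  have hpos : 0 < R v := lt_of_le_of_ne (hR v).1 (Ne.symm hne)
  have hwin : RWins G v (R v / 2) := by
    intro W hW
    exact hW _ _ (Or.inl ⟨h, by linarith, by linarith [(hR v).2.1]⟩)
  exact (hR v).2.2.2 (R v / 2) (by linarith) (by linarith) hwin

/-- Local inequality: if `ws` is a maximal blue successor and `w` a red
successor then `2 R v ≤ R ws + R w`. -/
lemma two_mul_le_blue_red {v ws w : V}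
    (hws : G.blue v ws) (hwsmax : ∀ u, G.blue v u → R u ≤ R ws)
    (hw : G.red v w) : 2 * R v ≤ R ws + R w := by
  by_contra hlt
  push_neg at hlt
  have hp0 : 0 ≤ R ws := (hR ws).1
  have hp1 : R ws ≤ 1 := (hR ws).2.1
  have hq0 : 0 ≤ R w := (hR w).1
  have hq1 : R w ≤ 1 := (hR w).2.1
  have hr1 : R v ≤ 1 := (hR v).2.1
  set p := R ws
  set q := R w
  set r := R v with hrdef
  set η : ℝ := (r - (p + q) / 2) / 4 with hη
  have hηpos : 0 < η := by
    have : (p + q) / 2 < r := by linarith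
    simp only [hη]; linarith
  set x : ℝ := ((p + q) / 2 + r) / 2 with hx
  have hx0 : 0 ≤ x := by simp only [hx]; linarith
  have hxr : x < r := by simp only [hx, hη] at *; linarith
  have hx1 : x ≤ 1 := by linarith
  have hwin : RWins G v x := by
    apply rwins_intro
    rcases le_total q p with hqp | hpq
    · -- Alice moves herself to w when she wins a bid
      refine Or.inr ⟨hx0, hx1, x - q - η, by simp only [hx, hη]; linarith,
        by linarith [hηpos, hq0], fun s hs0 hs1 => ⟨fun _ => ?_, fun hts => ?_⟩⟩
      · exact Or.inl ⟨w, hw, (hR w).2.2.1 (x - (x - q - η)) (by linarith)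
          (by linarith)⟩
      · constructor
        · intro u hu
          have hup : R u ≤ p := hwsmax u hu
          exact (hR u).2.2.1 (x + s) (by simp only [hx, hη] at *; linarith)
            (by linarith)
        · exact ⟨w, hw, (hR w).2.2.1 (x + s)
            (by simp only [hx, hη] at *; linarith) (by linarith)⟩
    · -- Alice passes the move to Bob when she wins a bid
      refine Or.inr ⟨hx0, hx1, x - p - η, by simp only [hx, hη]; linarith,
        by linarith [hηpos, hp0], fun s hs0 hs1 => ⟨fun _ => ?_, fun hts => ?_⟩⟩
      · refine Or.inr fun u hu => ?_
        have hup : R u ≤ p := hwsmax u hu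
        exact (hR u).2.2.1 (x - (x - p - η)) (by linarith) (by linarith)
      · constructor
        · intro u hu
          have hup : R u ≤ p := hwsmax u hu
          exact (hR u).2.2.1 (x + s) (by simp only [hx, hη] at *; linarith)
            (by linarith)
        · exact ⟨w, hw, (hR w).2.2.1 (x + s)
            (by simp only [hx, hη] at *; linarith) (by linarith)⟩
  exact (hR v).2.2.2 x hx0 hxr hwin

/-- Local inequality at positions where Bob has no moves. -/
lemma two_mul_le_red_only {v w : V}
    (hnb : ¬ ∃ u, G.blue v u) (hw : G.red v w) : 2 * R v ≤ R w := by
  by_contra hlt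
  push_neg at hlt
  have hq0 : 0 ≤ R w := (hR w).1
  have hq1 : R w ≤ 1 := (hR w).2.1
  have hr1 : R v ≤ 1 := (hR v).2.1
  set q := R w
  set r := R v
  set η : ℝ := (r - q / 2) / 4 with hη
  have hηpos : 0 < η := by simp only [hη]; linarith
  set x : ℝ := (q / 2 + r) / 2 with hx
  have hx0 : 0 ≤ x := by simp only [hx]; linarith
  have hxr : x < r := by simp only [hx, hη] at *; linarith
  have hx1 : x ≤ 1 := by linarith
  have hwin : RWins G v x := by
    apply rwins_intro
    refine Or.inr ⟨hx0, hx1, x, hx0, le_rfl, fun s hs0 hs1 =>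
      ⟨fun _ => Or.inr fun u hu => absurd ⟨u, hu⟩ hnb, fun hts => ?_⟩⟩
    refine ⟨fun u hu => absurd ⟨u, hu⟩ hnb, w, hw, (hR w).2.2.1 (x + s)
      (by simp only [hx, hη] at *; linarith) (by linarith)⟩
  exact (hR v).2.2.2 x hx0 hxr hwin

/-- Local inequality at positions where Alice has no moves. -/
lemma two_mul_le_blue_only {v ws : V}
    (hws : G.blue v ws) (hwsmax : ∀ u, G.blue v u → R u ≤ R ws)
    (hnr : ¬ ∃ u, G.red v u) : 2 * R v ≤ 1 + R ws := by
  by_contra hlt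
  push_neg at hlt
  have hp0 : 0 ≤ R ws := (hR ws).1
  have hp1 : R ws ≤ 1 := (hR ws).2.1
  have hr1 : R v ≤ 1 := (hR v).2.1
  set p := R ws
  set r := R v
  set η : ℝ := (r - (1 + p) / 2) / 4 with hη
  have hηpos : 0 < η := by simp only [hη]; linarith
  set x : ℝ := ((1 + p) / 2 + r) / 2 with hx
  have hx0 : 0 ≤ x := by simp only [hx]; linarith
  have hxr : x < r := by simp only [hx, hη] at *; linarith
  have hx1 : x ≤ 1 := by linarith
  have hwin : RWins G v x := by
    apply rwins_intro
    refine Or.inr ⟨hx0, hx1, 1 - x + η, by linarith, by simp only [hx, hη] at *; linarith,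
      fun s hs0 hs1 => ⟨fun _ => ?_, fun hts => absurd hts (by linarith)⟩⟩
    refine Or.inr fun u hu => ?_
    have hup : R u ≤ p := hwsmax u hu
    exact (hR u).2.2.1 (x - (1 - x + η)) (by simp only [hx, hη] at *; linarith)
      (by linarith)
  exact (hR v).2.2.2 x hx0 hxr hwin

/-- Local inequality at positions where neither player has a move. -/
lemma two_mul_le_none {v : V}
    (hnb : ¬ ∃ u, G.blue v u) (hnr : ¬ ∃ u, G.red v u) : 2 * R v ≤ 1 := by
  by_contra hlt
  push_neg at hlt
  have hr1 : R v ≤ 1 := (hR v).2.1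
  set r := R v
  set η : ℝ := (r - 1 / 2) / 4 with hη
  have hηpos : 0 < η := by simp only [hη]; linarith
  set x : ℝ := (1 / 2 + r) / 2 with hx
  have hx0 : 0 ≤ x := by simp only [hx]; linarith
  have hxr : x < r := by simp only [hx, hη] at *; linarith
  have hx1 : x ≤ 1 := by linarith
  have hwin : RWins G v x := by
    apply rwins_intro
    refine Or.inr ⟨hx0, hx1, 1 - x + η, by linarith, by simp only [hx, hη] at *; linarith,
      fun s hs0 hs1 => ⟨fun _ => Or.inr fun u hu => absurd ⟨u, hu⟩ hnb,
        fun hts => absurd hts (by linarith)⟩⟩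
  exact (hR v).2.2.2 x hx0 hxr hwin

end ValueLemmas

/-- The deflated threshold profile. -/
noncomputable def fP (e x : ℝ) : ℝ := x - e * (x * (2 - x))

lemma fP_mono {e x y : ℝ} (he0 : 0 ≤ e) (he4 : e ≤ 1/4)
    (hx0 : 0 ≤ x) (hy1 : y ≤ 1) (hxy : x ≤ y) : fP e x ≤ fP e y := by
  have h1 : fP e y - fP e x = (y - x) * (1 - e * (2 - x - y)) := by
    simp only [fP]; ring
  nlinarith [mul_nonneg (sub_nonneg.mpr hxy)
    (by nlinarith : (0:ℝ) ≤ 1 - e * (2 - x - y))]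

lemma fP_le {e x : ℝ} (he0 : 0 ≤ e) (hx0 : 0 ≤ x) (hx1 : x ≤ 1) : fP e x ≤ x := by
  have : 0 ≤ e * (x * (2 - x)) := mul_nonneg he0 (mul_nonneg hx0 (by linarith))
  simp only [fP]; linarith

lemma fP_lt_rev {e x y : ℝ} (he0 : 0 ≤ e) (he4 : e ≤ 1/4)
    (hy0 : 0 ≤ y) (hx1 : x ≤ 1) (h : fP e x < fP e y) : x < y := by
  by_contra hc
  push_neg at hc
  exact absurd (fP_mono he0 he4 hy0 hx1 hc) (not_le.mpr h)

lemma fP_pos_rev {e x : ℝ} (he0 : 0 ≤ e) (hx0 : 0 ≤ x) (h : 0 < fP e x) : 0 < x := by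
  rcases lt_or_eq_of_le hx0 with h' | h'
  · exact h'
  · exfalso; rw [← h'] at h; simp [fP] at h

lemma key_K1 {e y z r : ℝ} (he0 : 0 < e) (he4 : e ≤ 1/4)
    (hy0 : 0 ≤ y) (hy1 : y ≤ 1) (hz0 : 0 ≤ z) (hz1 : z ≤ 1)
    (hr0 : 0 ≤ r) (hr1 : r ≤ 1) (h : 2 * r ≤ y + z) :
    2 * fP e r ≤ fP e y + fP e z := by
  have key : fP e y + fP e z - 2 * fP e r
      = (1 - 2*e) * (y + z - 2*r) + e * (y^2 + z^2 - 2*r^2) := by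
    simp only [fP]; ring
  have h2 : (2*r)^2 ≤ (y+z)^2 := by nlinarith
  nlinarith [sq_nonneg (y - z)]

lemma key_K2 {e y z r : ℝ} (he0 : 0 < e) (he4 : e ≤ 1/4)
    (hy0 : 0 ≤ y) (hy1 : y ≤ 1) (hz0 : 0 ≤ z) (hz1 : z ≤ 1)
    (hr0 : 0 ≤ r) (hr1 : r ≤ 1) (h : 2 * r ≤ y + z) (hyr : y < r) :
    2 * fP e r < fP e y + fP e z := by
  have key : fP e y + fP e z - 2 * fP e r
      = (1 - 2*e) * (y + z - 2*r) + e * (y^2 + z^2 - 2*r^2) := by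
    simp only [fP]; ring
  rcases lt_or_eq_of_le h with h' | h'
  · have h2 : (2*r)^2 ≤ (y+z)^2 := by nlinarith
    nlinarith [sq_nonneg (y - z)]
  · have hz : z = 2*r - y := by linarith
    subst hz
    have h3 : 0 < (r - y)^2 := by nlinarith
    nlinarith [mul_pos he0 h3]

lemma key_KB {e z r : ℝ} (he0 : 0 < e) (he4 : e ≤ 1/4)
    (hz0 : 0 ≤ z) (hz1 : z ≤ 1) (hr0 : 0 < r) (hr1 : r ≤ 1)
    (h : 2 * r ≤ z) : 2 * fP e r < fP e z := by
  have key : fP e z - 2 * fP e r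
      = (1 - 2*e) * (z - 2*r) + e * (z^2 - 2*r^2) := by
    simp only [fP]; ring
  have h2 : (2*r)^2 ≤ z^2 := by nlinarith
  nlinarith [mul_pos he0 (mul_pos hr0 hr0),
    mul_nonneg (by linarith : (0:ℝ) ≤ 1 - 2*e) (by linarith : (0:ℝ) ≤ z - 2*r)]

lemma key_KC {e p r : ℝ} (he0 : 0 < e) (he4 : e ≤ 1/4)
    (hp0 : 0 ≤ p) (hp1 : p ≤ 1) (hr0 : 0 ≤ r) (hr1 : r ≤ 1)
    (h : 2 * r ≤ 1 + p) : 2 * fP e r ≤ 1 + fP e p := by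
  have key : 1 + fP e p - 2 * fP e r
      = (1 - 2*e) * (1 + p - 2*r) + e * (2 + p^2 - 2*r^2) := by
    simp only [fP]; ring
  nlinarith [sq_nonneg p, mul_nonneg (by linarith : (0:ℝ) ≤ 1 - 2*e)
    (by linarith : (0:ℝ) ≤ 1 + p - 2*r),
    mul_nonneg he0.le (by nlinarith : (0:ℝ) ≤ 2 + p^2 - 2*r^2)]

/-- A finite set of positive reals has a positive lower bound. -/
lemma pos_lb_of_finite {s : Set ℝ} (hs : s.Finite) (hpos : ∀ x ∈ s, 0 < x) :
    ∃ γ : ℝ, 0 < γ ∧ ∀ x ∈ s, γ ≤ x := by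
  rcases s.eq_empty_or_nonempty with rfl | hne
  · exact ⟨1, one_pos, by simp⟩
  · obtain ⟨x, hx, hmin⟩ := Set.exists_min_image s id hs hne
    exact ⟨x, hpos x hx, fun y hy => hmin y hy⟩

lemma exists_blue_max [Finite V] (G : BiddingGame V) (R : V → ℝ) (v : V)
    (h : ∃ w, G.blue v w) :
    ∃ ws, G.blue v ws ∧ ∀ u, G.blue v u → R u ≤ R ws := by
  have hfin : {w | G.blue v w}.Finite := Set.toFinite _
  obtain ⟨ws, hws, hmax⟩ := Set.exists_max_image {w | G.blue v w} R hfin h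
  exact ⟨ws, hws, hmax⟩

/-- Bob's safety region. -/
def Safe (e : ℝ) (N₀ : ℕ) (R : V → ℝ) (v : V) (a b : ℕ) : Prop :=
  R v = 1 ∨ ((a:ℝ) < fP e (R v) * ((a:ℝ) + (b:ℝ)) ∧ N₀ ≤ a + b)

lemma pos_of_one_le_mul {c t : ℝ} (hc : 0 < c) (h : 1 ≤ c * t) : 0 < t := by
  by_contra hle
  push_neg at hle
  nlinarith

lemma one_le_mul_of_le {c T t : ℝ} (h : 1 ≤ c * t) (ht : 0 ≤ t) (hcT : c ≤ T) :
    1 ≤ T * t := le_trans h (mul_le_mul_of_nonneg_right hcT ht)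

lemma safe_num_helper {e : ℝ} {R : V → ℝ} {N₀ : ℕ} {w : V} {a' b' a b : ℕ}
    (hsum : a' + b' = a + b) (hN : N₀ ≤ a + b)
    (h : (a':ℝ) < fP e (R w) * ((a:ℝ) + (b:ℝ))) : Safe e N₀ R w a' b' := by
  refine Or.inr ⟨?_, by omega⟩
  have hc : ((a':ℕ):ℝ) + ((b':ℕ):ℝ) = (a:ℝ) + (b:ℝ) := by
    have := congrArg (fun n : ℕ => (n:ℝ)) hsum
    push_cast at this
    linarith
  rw [hc]
  exact h

/-- The main closure property: from a safe configuration, one round of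
bidding (with Bob playing stable moves) cannot lead Alice to a win. -/
lemma safe_step [Finite V] (G : BiddingGame V) (R : V → ℝ)
    (hR : ∀ v, IsRichmanValueAt G v (R v))
    {e : ℝ} (he0 : 0 < e) (he4 : e ≤ 1/4)
    {N₀ : ℕ} (hN1 : 1 ≤ N₀)
    (hg1 : ∀ y z r : ℝ, y ∈ Set.range R → z ∈ Set.range R → r ∈ Set.range R →
      y < r → 2*r ≤ y + z → 1 ≤ (N₀:ℝ) * (fP e y + fP e z - 2 * fP e r))
    (hg2 : ∀ z r : ℝ, z ∈ Set.range R → r ∈ Set.range R →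
      0 < r → 2*r ≤ z → 1 ≤ (N₀:ℝ) * (fP e z - 2 * fP e r))
    (v : V) (a b : ℕ) (adv : Bool)
    (hS : Safe e N₀ R v a b)
    (hstep : winStep (restrictBlue G R)
      (fun v a b _ => ¬ Safe e N₀ R v a b) v a b adv) :
    False := by
  classical
  have hN0R : (0:ℝ) < (N₀:ℝ) := by exact_mod_cast hN1
  rcases hstep with hterm | ⟨α, hαa, hall⟩
  · -- terminal case
    have hterm' : G.aliceWinsAt v := hterm
    have h0 : R v = 0 := R_zero_of_aliceWinsAt G R hR hterm'
    rcases hS with h1 | ⟨h2, _⟩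
    · rw [h0] at h1; norm_num at h1
    · rw [h0] at h2
      simp only [fP] at h2
      norm_num at h2
      exact absurd h2 (not_lt.mpr (Nat.cast_nonneg _))
  · -- bidding case
    by_cases hr1 : R v = 1
    · -- value-one positions are absorbing for Bob
      have hblue : ∃ w, G.blue v w := by
        by_contra hnb
        by_cases hred : ∃ w, G.red v w
        · obtain ⟨w, hw⟩ := hred
          have h5 := two_mul_le_red_only G R hR hnb hw
          have := (hR w).2.1
          rw [hr1] at h5; linarith
        · have h7 := two_mul_le_none G R hR hnb hred
          rw [hr1] at h7; linarith
      obtain ⟨ws, hws, hwsmax⟩ := exists_blue_max G R v hblue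
      have hws1 : R ws = 1 := by
        by_cases hred : ∃ w, G.red v w
        · obtain ⟨w, hw⟩ := hred
          have h4 := two_mul_le_blue_red G R hR hws hwsmax hw
          have := (hR ws).2.1; have := (hR w).2.1
          rw [hr1] at h4; linarith
        · have h6 := two_mul_le_blue_only G R hR hws hwsmax hred
          have := (hR ws).2.1
          rw [hr1] at h6; linarith
      have hredall : ∀ w, G.red v w → R w = 1 := by
        intro w hw
        have h4 := two_mul_le_blue_red G R hR hws hwsmax hw
        have := (hR w).2.1
        rw [hr1, hws1] at h4; linarith
      have hws' : (restrictBlue G R).blue v ws := ⟨hws, hwsmax⟩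
      by_cases hαb : α ≤ b
      · obtain ⟨c1, c2, c3, c4⟩ := hall α hαb
        cases adv with
        | true =>
          rcases c3 rfl rfl with hA | hB
          · rcases hA with ⟨w, hw, hnS⟩ | hallb
            · exact hnS (Or.inl (hredall w hw))
            · exact (hallb ws hws') (Or.inl hws1)
          · exact (hB.1 ws hws') (Or.inl hws1)
        | false =>
          rcases (c4 rfl rfl).2 with ⟨w, hw, hnS⟩ | hallb
          · exact hnS (Or.inl (hredall w hw))
          · exact (hallb ws hws') (Or.inl hws1)
      · push_neg at hαb
        obtain ⟨c1, _, _, _⟩ := hall b le_rfl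
        rcases c1 hαb with ⟨w, hw, hnS⟩ | hallb
        · exact hnS (Or.inl (hredall w hw))
        · exact (hallb ws hws') (Or.inl hws1)
    · -- numeric case
      rcases hS with h1 | ⟨hSa, hST⟩
      · exact hr1 h1
      have hr0 : 0 ≤ R v := (hR v).1
      have hrle1 : R v ≤ 1 := (hR v).2.1
      have hA0 : (0:ℝ) ≤ (a:ℝ) := Nat.cast_nonneg a
      have hB0 : (0:ℝ) ≤ (b:ℝ) := Nat.cast_nonneg b
      have hT0 : (0:ℝ) ≤ (a:ℝ) + (b:ℝ) := by linarith
      have hNT : (N₀:ℝ) ≤ (a:ℝ) + (b:ℝ) := by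
        have : ((N₀:ℕ):ℝ) ≤ ((a+b:ℕ):ℝ) := by exact_mod_cast hST
        push_cast at this; linarith
      have hT1 : (1:ℝ) ≤ (a:ℝ) + (b:ℝ) := le_trans (by exact_mod_cast hN1) hNT
      have hTpos : (0:ℝ) < (a:ℝ) + (b:ℝ) := by linarith
      have hαR : (α:ℝ) ≤ (a:ℝ) := by exact_mod_cast hαa
      have hα0 : (0:ℝ) ≤ (α:ℝ) := Nat.cast_nonneg α
      have hfr_pos : 0 < fP e (R v) := by
        nlinarith [lt_of_le_of_lt hA0 hSa]
      have hrpos : 0 < R v := fP_pos_rev he0.le hr0 hfr_pos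
      by_cases hblue : ∃ w, G.blue v w
      · obtain ⟨ws, hws, hwsmax⟩ := exists_blue_max G R v hblue
        have hws' : (restrictBlue G R).blue v ws := ⟨hws, hwsmax⟩
        have hp0 : 0 ≤ R ws := (hR ws).1
        have hp1 : R ws ≤ 1 := (hR ws).2.1
        have hfp1 : fP e (R ws) ≤ 1 := le_trans (fP_le he0.le hp0 hp1) hp1
        by_cases hred : ∃ w, G.red v w
        · -- TYPE A : both players have moves
          obtain ⟨w₀, hw₀⟩ := hred
          have hF4 : ∀ w, G.red v w → 2 * R v ≤ R ws + R w := fun w hw =>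
            two_mul_le_blue_red G R hR hws hwsmax hw
          by_cases hHA : ∀ w, G.red v w →
              (R w = 1 ∨ (a:ℝ) - (α:ℝ) < fP e (R w) * ((a:ℝ) + (b:ℝ)))
          · by_cases hHB : R ws = 1 ∨
                (a:ℝ) - (α:ℝ) < fP e (R ws) * ((a:ℝ) + (b:ℝ))
            · -- all `Alice pays α` landings are safe
              by_cases hα1 : 1 ≤ α
              · -- Bob underbids with 0
                obtain ⟨c1, _, _, _⟩ := hall 0 (Nat.zero_le b)
                rcases c1 (by omega) with ⟨w, hw, hnS⟩ | hallb
                · apply hnS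
                  rcases hHA w hw with h | h
                  · exact Or.inl h
                  · exact safe_num_helper (by omega) hST
                      (by push_cast [Nat.cast_sub hαa]; linarith)
                · apply (hallb ws hws')
                  rcases hHB with h | h
                  · exact Or.inl h
                  · exact safe_num_helper (by omega) hST
                      (by push_cast [Nat.cast_sub hαa]; linarith)
              · have hα0' : α = 0 := by omega
                subst hα0'
                obtain ⟨_, _, c3, c4⟩ := hall 0 (Nat.zero_le b)
                cases adv with
                | true =>
                  rcases c3 rfl rfl with hA' | hB'
                  · rcases hA' with ⟨w, hw, hnS⟩ | hallb
                    · apply hnS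
                      rcases hHA w hw with h | h
                      · exact Or.inl h
                      · exact safe_num_helper (by omega) hST
                          (by push_cast [Nat.sub_zero] at h ⊢; linarith)
                    · apply (hallb ws hws')
                      rcases hHB with h | h
                      · exact Or.inl h
                      · exact safe_num_helper (by omega) hST
                          (by push_cast [Nat.sub_zero] at h ⊢; linarith)
                  · apply (hB'.1 ws hws')
                    rcases hHB with h | h
                    · exact Or.inl h
                    · exact safe_num_helper (by omega) hST
                        (by push_cast [Nat.sub_zero] at h ⊢; linarith)
                | false =>
                  rcases (c4 rfl rfl).2 with ⟨w, hw, hnS⟩ | hallb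
                  · apply hnS
                    rcases hHA w hw with h | h
                    · exact Or.inl h
                    · exact safe_num_helper (by omega) hST
                        (by push_cast [Nat.sub_zero] at h ⊢; linarith)
                  · apply (hallb ws hws')
                    rcases hHB with h | h
                    · exact Or.inl h
                    · exact safe_num_helper (by omega) hST
                        (by push_cast [Nat.sub_zero] at h ⊢; linarith)
            · -- witness: the stable blue landing is deep
              push_neg at hHB
              obtain ⟨hpne1, hwT⟩ := hHB
              have hy1r : R ws < R v := by
                have hlt : fP e (R ws) * ((a:ℝ) + (b:ℝ)) <
                    fP e (R v) * ((a:ℝ) + (b:ℝ)) := by linarith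
                exact fP_lt_rev he0.le he4 hr0 hp1
                  ((mul_lt_mul_iff_left₀ hTpos).mp hlt)
              have hchainO : ∀ w, G.red v w →
                  (a:ℝ) + (α:ℝ) + 1 < fP e (R w) * ((a:ℝ) + (b:ℝ)) := by
                intro w hw
                have hg := hg1 (R ws) (R w) (R v) ⟨ws, rfl⟩ ⟨w, rfl⟩ ⟨v, rfl⟩
                  hy1r (by linarith [hF4 w hw])
                have hΘ0 : 0 < fP e (R ws) + fP e (R w) - 2 * fP e (R v) :=
                  pos_of_one_le_mul hN0R hg
                have hTg := one_le_mul_of_le hg hΘ0.le hNT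
                linarith [hTg, hwT, hSa]
              have hchainT : ∀ w, G.red v w →
                  (a:ℝ) + (α:ℝ) < fP e (R w) * ((a:ℝ) + (b:ℝ)) := by
                intro w hw
                have hK1 := key_K1 he0 he4 hp0 hp1 (hR w).1 (hR w).2.1 hr0 hrle1
                  (by linarith [hF4 w hw])
                linarith [mul_le_mul_of_nonneg_right hK1 hT0, hwT, hSa]
              cases adv with
              | true =>
                have hb : α + 1 ≤ b := by
                  have h1 := hchainO w₀ hw₀
                  have hfle : fP e (R w₀) ≤ 1 :=
                    le_trans (fP_le he0.le (hR w₀).1 (hR w₀).2.1) (hR w₀).2.1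
                  have h2 : (α:ℝ) + 1 < (b:ℝ) := by
                    linarith [mul_le_mul_of_nonneg_right hfle hT0, h1]
                  have : α + 1 < b := by exact_mod_cast h2
                  omega
                obtain ⟨_, c2, _, _⟩ := hall (α+1) hb
                obtain ⟨w, hw, hnS⟩ := (c2 (by omega)).2
                apply hnS
                exact safe_num_helper (by omega) hST
                  (by push_cast [Nat.cast_sub hb]; linarith [hchainO w hw])
              | false =>
                have hb : α ≤ b := by
                  have h1 := hchainT w₀ hw₀
                  have hfle : fP e (R w₀) ≤ 1 :=
                    le_trans (fP_le he0.le (hR w₀).1 (hR w₀).2.1) (hR w₀).2.1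
                  have h2 : (α:ℝ) < (b:ℝ) := by
                    linarith [mul_le_mul_of_nonneg_right hfle hT0, h1]
                  have : α < b := by exact_mod_cast h2
                  omega
                obtain ⟨_, _, _, c4⟩ := hall α hb
                obtain ⟨w, hw, hnS⟩ := (c4 rfl rfl).1.2
                apply hnS
                exact safe_num_helper (by omega) hST
                  (by push_cast [Nat.cast_sub hb]; linarith [hchainT w hw])
          · -- witness: some red landing is deep
            push_neg at hHA
            obtain ⟨w₁, hw₁, h1ne, h1T⟩ := hHA
            have hq0 : 0 ≤ R w₁ := (hR w₁).1
            have hq1 : R w₁ ≤ 1 := (hR w₁).2.1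
            have hy1r : R w₁ < R v := by
              have hlt : fP e (R w₁) * ((a:ℝ) + (b:ℝ)) <
                  fP e (R v) * ((a:ℝ) + (b:ℝ)) := by linarith
              exact fP_lt_rev he0.le he4 hr0 hq1
                ((mul_lt_mul_iff_left₀ hTpos).mp hlt)
            have hchainO : (a:ℝ) + (α:ℝ) + 1 < fP e (R ws) * ((a:ℝ) + (b:ℝ)) := by
              have hg := hg1 (R w₁) (R ws) (R v) ⟨w₁, rfl⟩ ⟨ws, rfl⟩ ⟨v, rfl⟩
                hy1r (by linarith [hF4 w₁ hw₁])
              have hΘ0 : 0 < fP e (R w₁) + fP e (R ws) - 2 * fP e (R v) :=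
                pos_of_one_le_mul hN0R hg
              have hTg := one_le_mul_of_le hg hΘ0.le hNT
              linarith [hTg, h1T, hSa]
            have hchainT : (a:ℝ) + (α:ℝ) < fP e (R ws) * ((a:ℝ) + (b:ℝ)) := by
              have hK1 := key_K1 he0 he4 hq0 hq1 hp0 hp1 hr0 hrle1
                (by linarith [hF4 w₁ hw₁])
              linarith [mul_le_mul_of_nonneg_right hK1 hT0, h1T, hSa]
            cases adv with
            | true =>
              have hb : α + 1 ≤ b := by
                have h2 : (α:ℝ) + 1 < (b:ℝ) := by
                  linarith [mul_le_mul_of_nonneg_right hfp1 hT0, hchainO]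
                have : α + 1 < b := by exact_mod_cast h2
                omega
              obtain ⟨_, c2, _, _⟩ := hall (α+1) hb
              apply ((c2 (by omega)).1 ws hws')
              exact safe_num_helper (by omega) hST
                (by push_cast [Nat.cast_sub hb]; linarith [hchainO])
            | false =>
              have hb : α ≤ b := by
                have h2 : (α:ℝ) < (b:ℝ) := by
                  linarith [mul_le_mul_of_nonneg_right hfp1 hT0, hchainT]
                have : α < b := by exact_mod_cast h2
                omega
              obtain ⟨_, _, _, c4⟩ := hall α hb
              apply ((c4 rfl rfl).1.1 ws hws')
              exact safe_num_helper (by omega) hST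
                (by push_cast [Nat.cast_sub hb]; linarith [hchainT])
        · -- TYPE C : Alice has no moves, Bob does
          have hF6 := two_mul_le_blue_only G R hR hws hwsmax hred
          by_cases hab : α + 1 ≤ b
          · obtain ⟨_, c2, _, _⟩ := hall (α+1) hab
            obtain ⟨w, hw, _⟩ := (c2 (by omega)).2
            exact hred ⟨w, hw⟩
          · have hba : b ≤ α := by omega
            have hbαR : (b:ℝ) ≤ (α:ℝ) := by exact_mod_cast hba
            have hKC := key_KC he0 he4 hp0 hp1 hr0 hrle1 hF6
            have hnum : (a:ℝ) - (α:ℝ) < fP e (R ws) * ((a:ℝ) + (b:ℝ)) := by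
              linarith [mul_le_mul_of_nonneg_right hKC hT0, hSa, hbαR]
            rcases Nat.lt_or_ge b α with hblt | hbge
            · obtain ⟨c1, _, _, _⟩ := hall b le_rfl
              rcases c1 hblt with ⟨w, hw, _⟩ | hallb
              · exact hred ⟨w, hw⟩
              · apply (hallb ws hws')
                exact safe_num_helper (by omega) hST
                  (by push_cast [Nat.cast_sub hαa]; linarith)
            · have hbeq : b = α := by omega
              obtain ⟨_, _, c3, c4⟩ := hall α (by omega)
              cases adv with
              | true =>
                rcases c3 rfl rfl with hA' | hB'
                · rcases hA' with ⟨w, hw, _⟩ | hallb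
                  · exact hred ⟨w, hw⟩
                  · apply (hallb ws hws')
                    exact safe_num_helper (by omega) hST
                      (by push_cast [Nat.cast_sub hαa]; linarith)
                · obtain ⟨w, hw, _⟩ := hB'.2
                  exact hred ⟨w, hw⟩
              | false =>
                obtain ⟨w, hw, _⟩ := (c4 rfl rfl).1.2
                exact hred ⟨w, hw⟩
      · by_cases hred : ∃ w, G.red v w
        · -- TYPE B : Bob has no moves, Alice does
          obtain ⟨w₀, hw₀⟩ := hred
          have hF5 : ∀ w, G.red v w → 2 * R v ≤ R w := fun w hw =>
            two_mul_le_red_only G R hR hblue hw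
          have h2A : 2*(a:ℝ) < (a:ℝ) + (b:ℝ) := by
            have h5 := hF5 w₀ hw₀
            have hw01 := (hR w₀).2.1
            have hfP_le : fP e (R v) ≤ R v := fP_le he0.le hr0 hrle1
            nlinarith [mul_le_mul_of_nonneg_right hfP_le hT0,
              mul_le_mul_of_nonneg_right (show R v ≤ 1/2 by linarith) hT0]
          have hab' : a < b := by
            have : (a:ℝ) < (b:ℝ) := by linarith
            exact_mod_cast this
          have hb : α + 1 ≤ b := by omega
          obtain ⟨_, c2, _, _⟩ := hall (α+1) hb
          obtain ⟨w, hw, hnS⟩ := (c2 (by omega)).2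
          apply hnS
          have hKB := hg2 (R w) (R v) ⟨w, rfl⟩ ⟨v, rfl⟩ hrpos (hF5 w hw)
          have hΘ0 : 0 < fP e (R w) - 2 * fP e (R v) :=
            pos_of_one_le_mul hN0R hKB
          have hTg := one_le_mul_of_le hKB hΘ0.le hNT
          exact safe_num_helper (by omega) hST
            (by push_cast [Nat.cast_sub hb]; linarith [hTg, hSa])
        · -- TYPE D : no moves at all
          have h7 := two_mul_le_none G R hR hblue hred
          have hfP_le : fP e (R v) ≤ R v := fP_le he0.le hr0 hrle1
          have h2A : 2*(a:ℝ) < (a:ℝ) + (b:ℝ) := by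
            nlinarith [mul_le_mul_of_nonneg_right hfP_le hT0,
              mul_le_mul_of_nonneg_right (show R v ≤ 1/2 by linarith) hT0]
          have hab' : a < b := by
            have : (a:ℝ) < (b:ℝ) := by linarith
            exact_mod_cast this
          have hb : α + 1 ≤ b := by omega
          obtain ⟨_, c2, _, _⟩ := hall (α+1) hb
          obtain ⟨w, hw, _⟩ := (c2 (by omega)).2
          exact hred ⟨w, hw⟩

end StablePrevAux

open StablePrevAux

/-- **Theorem.**  Let `G` be a finite discrete bidding game, with Richman
value `R v` at each position `v`, and let `ε > 0`.  Then there is an `N` such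
that Bob has a stable strategy preventing Alice from winning `G(a*, b)`
(Alice holding `a` chips plus the tie-breaking advantage, Bob holding `b`
chips) whenever `a / (a + b) < R(G) - ε` and `b ≥ N`.  (Bob has a stable
strategy preventing Alice from winning iff Alice has no winning strategy
against Bob restricted to stable moves, i.e. in the game `restrictBlue G R`
in which Bob only ever moves to positions of maximal Richman value.) -/
theorem stable_prevention_below_threshold {V : Type} [Finite V]
    (G : BiddingGame V)
    (R : V → ℝ) (hR : ∀ v, IsRichmanValueAt G v (R v))
    (ε : ℝ) (hε : 0 < ε) :
    ∃ N : ℕ, ∀ a b : ℕ,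
      (a : ℝ) / ((a : ℝ) + (b : ℝ)) < R G.start - ε → N ≤ b →
      ¬ AliceWins (restrictBlue G R) G.start a b true := by
  classical
  set e : ℝ := min ε (1/4) with hedef
  have he0 : 0 < e := lt_min hε (by norm_num)
  have he4 : e ≤ 1/4 := min_le_right _ _
  have heε : e ≤ ε := min_le_left _ _
  have hEfin : (Set.range R).Finite := Set.finite_range R
  set S1 : Set ℝ := (fun t : ℝ × ℝ × ℝ => fP e t.1 + fP e t.2.1 - 2 * fP e t.2.2) ''
      {t : ℝ × ℝ × ℝ | (t.1 ∈ Set.range R ∧ t.2.1 ∈ Set.range R ∧ t.2.2 ∈ Set.range R)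
        ∧ t.1 < t.2.2 ∧ 2 * t.2.2 ≤ t.1 + t.2.1} with hS1def
  set S2 : Set ℝ := (fun t : ℝ × ℝ => fP e t.1 - 2 * fP e t.2) ''
      {t : ℝ × ℝ | (t.1 ∈ Set.range R ∧ t.2 ∈ Set.range R) ∧ 0 < t.2 ∧ 2 * t.2 ≤ t.1}
      with hS2def
  have hS1fin : S1.Finite := by
    refine Set.Finite.image _ (Set.Finite.subset (hEfin.prod (hEfin.prod hEfin)) ?_)
    rintro ⟨y, z, r⟩ ⟨⟨hy, hz, hr⟩, -, -⟩
    exact ⟨hy, hz, hr⟩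
  have hS2fin : S2.Finite := by
    refine Set.Finite.image _ (Set.Finite.subset (hEfin.prod hEfin) ?_)
    rintro ⟨z, r⟩ ⟨⟨hz, hr⟩, -, -⟩
    exact ⟨hz, hr⟩
  have hbounds : ∀ x ∈ Set.range R, 0 ≤ x ∧ x ≤ 1 := by
    rintro x ⟨u, rfl⟩
    exact ⟨(hR u).1, (hR u).2.1⟩
  have hpos : ∀ x ∈ S1 ∪ S2, 0 < x := by
    rintro x (⟨⟨y, z, r⟩, ⟨⟨hy, hz, hr⟩, hyr, hsum⟩, rfl⟩ |
              ⟨⟨z, r⟩, ⟨⟨hz, hr⟩, hrpos, hsum⟩, rfl⟩)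
    · obtain ⟨hy0, hy1⟩ := hbounds _ hy
      obtain ⟨hz0, hz1⟩ := hbounds _ hz
      obtain ⟨hr0, hr1⟩ := hbounds _ hr
      have := key_K2 he0 he4 hy0 hy1 hz0 hz1 hr0 hr1 hsum hyr
      simp only []
      linarith
    · obtain ⟨hz0, hz1⟩ := hbounds _ hz
      obtain ⟨hr0, hr1⟩ := hbounds _ hr
      have := key_KB he0 he4 hz0 hz1 hrpos hr1 hsum
      simp only []
      linarith
  obtain ⟨γ, hγ0, hγlb⟩ := pos_lb_of_finite (hS1fin.union hS2fin) hpos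
  obtain ⟨n, hn⟩ := exists_nat_gt (1/γ)
  refine ⟨max n 1, ?_⟩
  intro a b hab hbN hwin
  set N₀ : ℕ := max n 1 with hN₀def
  have hN1 : 1 ≤ N₀ := le_max_right _ _
  have hN₀γ : 1 ≤ (N₀:ℝ) * γ := by
    have h1 : (1/γ) < (N₀:ℝ) := lt_of_lt_of_le hn (by exact_mod_cast le_max_left n 1)
    rw [div_lt_iff₀ hγ0] at h1
    linarith
  have hN0R : (0:ℝ) ≤ (N₀:ℝ) := Nat.cast_nonneg _
  have hg1 : ∀ y z r : ℝ, y ∈ Set.range R → z ∈ Set.range R → r ∈ Set.range R →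
      y < r → 2*r ≤ y + z → 1 ≤ (N₀:ℝ) * (fP e y + fP e z - 2 * fP e r) := by
    intro y z r hy hz hr hyr hsum
    have hmem : fP e y + fP e z - 2 * fP e r ∈ S1 :=
      ⟨(y, z, r), ⟨⟨hy, hz, hr⟩, hyr, hsum⟩, rfl⟩
    have hγx := hγlb _ (Or.inl hmem)
    calc (1:ℝ) ≤ (N₀:ℝ) * γ := hN₀γ
      _ ≤ (N₀:ℝ) * (fP e y + fP e z - 2 * fP e r) :=
        mul_le_mul_of_nonneg_left hγx hN0R
  have hg2 : ∀ z r : ℝ, z ∈ Set.range R → r ∈ Set.range R →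
      0 < r → 2*r ≤ z → 1 ≤ (N₀:ℝ) * (fP e z - 2 * fP e r) := by
    intro z r hz hr hrpos hsum
    have hmem : fP e z - 2 * fP e r ∈ S2 := ⟨(z, r), ⟨⟨hz, hr⟩, hrpos, hsum⟩, rfl⟩
    have hγx := hγlb _ (Or.inr hmem)
    calc (1:ℝ) ≤ (N₀:ℝ) * γ := hN₀γ
      _ ≤ (N₀:ℝ) * (fP e z - 2 * fP e r) := mul_le_mul_of_nonneg_left hγx hN0R
  have hSafe : Safe e N₀ R G.start a b := by
    by_cases hr1 : R G.start = 1
    · exact Or.inl hr1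
    · refine Or.inr ⟨?_, by omega⟩
      have hb1 : 1 ≤ b := le_trans hN1 hbN
      have hb1R : (1:ℝ) ≤ (b:ℝ) := by exact_mod_cast hb1
      have hTpos : (0:ℝ) < (a:ℝ) + (b:ℝ) := by
        have := Nat.cast_nonneg (α := ℝ) a
        linarith
      rw [div_lt_iff₀ hTpos] at hab
      have hr0 : 0 ≤ R G.start := (hR G.start).1
      have hrle1 : R G.start ≤ 1 := (hR G.start).2.1
      have hfPge : R G.start - ε ≤ fP e (R G.start) := by
        have hB1 : R G.start * (2 - R G.start) ≤ 1 := by nlinarith [sq_nonneg (1 - R G.start)]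
        have hB0 : 0 ≤ R G.start * (2 - R G.start) := mul_nonneg hr0 (by linarith)
        have heB : e * (R G.start * (2 - R G.start)) ≤ ε := by nlinarith
        simp only [fP]
        linarith
      calc (a:ℝ) < (R G.start - ε) * ((a:ℝ) + (b:ℝ)) := hab
        _ ≤ fP e (R G.start) * ((a:ℝ) + (b:ℝ)) :=
          mul_le_mul_of_nonneg_right hfPge hTpos.le
  have hclosed : ∀ v' a' b' adv',
      winStep (restrictBlue G R) (fun v a b _ => ¬ Safe e N₀ R v a b) v' a' b' adv' →
      (fun (v : V) (a b : ℕ) (_ : Bool) => ¬ Safe e N₀ R v a b) v' a' b' adv' := by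
    intro v' a' b' adv' hstep hS
    exact safe_step G R hR he0 he4 hN1 hg1 hg2 v' a' b' adv' hS hstep
  exact hwin _ hclosed hSafe
end

section
/- Let S = {k ∈ ℕ : there exists an odd integer n ≥ 1 with k ≡ 2^{n−1} − 1 (mod 2^n)}, i.e., the set of k congruent to 0 mod 2, or 3 mod 8, or 15 mod 32, or in general 2^{n−1} − 1 mod 2^n for some odd n. Then S is not a finite union of arithmetic progressions; equivalently, the indicator function of S is not eventually periodic: there is no period p ≥ 1 and threshold N such that for all k ≥ N, k ∈ S if and only if k + p ∈ S. -/
/-- The set of nonnegative integers `k` for which there is an odd `n ≥ 1`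
with `k ≡ 2^(n-1) - 1 (mod 2^n)`: the `k` congruent to `0 mod 2`, or
`3 mod 8`, or `15 mod 32`, and so on. -/
def ultimatumDrawSet : Set ℕ :=
  {k : ℕ | ∃ n : ℕ, Odd n ∧ k ≡ 2 ^ (n - 1) - 1 [MOD 2 ^ n]}

private lemma pow_mul_odd_inj {a b m m' : ℕ} (hm : Odd m) (hm' : Odd m')
    (h : 2 ^ a * m = 2 ^ b * m') : a = b := by
  haveI : Fact (Nat.Prime 2) := ⟨Nat.prime_two⟩
  have hm0 : m ≠ 0 := by rintro rfl; simp [Nat.odd_iff] at hm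
  have hm0' : m' ≠ 0 := by rintro rfl; simp [Nat.odd_iff] at hm'
  have hvm : padicValNat 2 m = 0 :=
    padicValNat.eq_zero_of_not_dvd (by
      intro hd; have := Nat.odd_iff.mp hm; omega)
  have hvm' : padicValNat 2 m' = 0 :=
    padicValNat.eq_zero_of_not_dvd (by
      intro hd; have := Nat.odd_iff.mp hm'; omega)
  have := congrArg (padicValNat 2) h
  rwa [padicValNat.mul (pow_ne_zero _ two_ne_zero) hm0,
    padicValNat.mul (pow_ne_zero _ two_ne_zero) hm0',
    padicValNat.prime_pow, padicValNat.prime_pow, hvm, hvm'] at this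

/-- Membership characterization: `k ∈ S` iff the 2-adic valuation of `k+1`
is even, phrased via a decomposition `k + 1 = 2^a * m` with `m` odd. -/
private lemma mem_ultimatumDrawSet_iff {k a m : ℕ} (hm : Odd m)
    (h : k + 1 = 2 ^ a * m) : k ∈ ultimatumDrawSet ↔ Even a := by
  constructor
  · rintro ⟨n, hn, hc⟩
    have hn1 : 1 ≤ n := hn.pos
    have hpos : 0 < (2 : ℕ) ^ (n - 1) := Nat.pow_pos (by norm_num)
    have hc1 : k + 1 ≡ 2 ^ (n - 1) [MOD 2 ^ n] := by
      have := hc.add_right 1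
      rwa [Nat.sub_add_cancel hpos] at this
    have hlt : (2 : ℕ) ^ (n - 1) < 2 ^ n :=
      Nat.pow_lt_pow_right (by norm_num) (by omega)
    have hmod : (2 ^ a * m) % 2 ^ n = 2 ^ (n - 1) := by
      rw [← h]
      calc (k + 1) % 2 ^ n = 2 ^ (n - 1) % 2 ^ n := hc1
        _ = 2 ^ (n - 1) := Nat.mod_eq_of_lt hlt
    have hdecomp : 2 ^ a * m = 2 ^ n * (2 ^ a * m / 2 ^ n) + 2 ^ (n - 1) := by
      conv_lhs => rw [← Nat.div_add_mod (2 ^ a * m) (2 ^ n)]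
      rw [hmod]
    have hpow : (2 : ℕ) ^ n = 2 ^ (n - 1) * 2 := by
      rw [← pow_succ]; congr 1; omega
    obtain ⟨q, hq⟩ : ∃ q, 2 ^ a * m = 2 ^ n * q + 2 ^ (n - 1) := ⟨_, hdecomp⟩
    have hdecomp2 : 2 ^ a * m = 2 ^ (n - 1) * (2 * q + 1) := by
      rw [hq, hpow]; ring
    have := pow_mul_odd_inj hm (⟨_, rfl⟩ : Odd (2 * q + 1)) hdecomp2
    obtain ⟨t, ht⟩ := hn
    have : a = n - 1 := this
    subst this
    exact ⟨t, by omega⟩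
  · intro ha
    refine ⟨a + 1, by rw [Nat.odd_add_one, Nat.not_odd_iff_even]; exact ha, ?_⟩
    obtain ⟨j, hj⟩ := hm
    have hpos : 0 < (2 : ℕ) ^ a := Nat.pow_pos (by norm_num)
    have hk : k = 2 ^ (a + 1 - 1) - 1 + 2 ^ (a + 1) * j := by
      have h2 : (2 : ℕ) ^ (a + 1) = 2 ^ a * 2 := by rw [pow_succ]
      have : k + 1 = 2 ^ a * (2 * j + 1) := by rw [h, hj]
      simp only [Nat.add_sub_cancel]
      have hje : 2 ^ a * (2 * j + 1) = 2 ^ a + 2 ^ (a + 1) * j := by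
        rw [h2]; ring
      omega
    rw [hk]
    refine ((Nat.modEq_iff_dvd' (Nat.le_add_right _ _)).mpr ?_).symm
    simp only [Nat.add_sub_cancel_left]
    exact dvd_mul_right _ _

private lemma ultimatumDrawSet_not_eventually_periodic :
    ¬ ∃ p : ℕ, 1 ≤ p ∧ ∃ N : ℕ, ∀ k : ℕ, N ≤ k →
        (k ∈ ultimatumDrawSet ↔ k + p ∈ ultimatumDrawSet) := by
  rintro ⟨p, hp, N, hN⟩
  obtain ⟨s, u, hu, rfl⟩ := Nat.exists_eq_two_pow_mul_odd (n := p) (by omega)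
  set k := 2 ^ (s + 1) * (2 * N + 1) - 1 with hk
  have hpos : 1 ≤ 2 ^ (s + 1) * (2 * N + 1) := Nat.mul_pos (pow_pos two_pos _) (by omega)
  have hk1 : k + 1 = 2 ^ (s + 1) * (2 * N + 1) := by omega
  have hkN : N ≤ k := by
    have h2 : 2 ≤ 2 ^ (s + 1) := Nat.one_lt_two_pow (by omega)
    have : 2 * (2 * N + 1) ≤ 2 ^ (s + 1) * (2 * N + 1) :=
      Nat.mul_le_mul_right _ h2
    omega
  have hkp1 : k + 2 ^ s * u + 1 = 2 ^ s * (2 * (2 * N + 1) + u) := by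
    have : (2 : ℕ) ^ (s + 1) = 2 ^ s * 2 := pow_succ 2 s
    rw [show k + 2 ^ s * u + 1 = (k + 1) + 2 ^ s * u by ring, hk1, this]; ring
  have h1 : k ∈ ultimatumDrawSet ↔ Even (s + 1) :=
    mem_ultimatumDrawSet_iff ⟨N, by ring⟩ hk1
  have h2 : k + 2 ^ s * u ∈ ultimatumDrawSet ↔ Even s := by
    refine mem_ultimatumDrawSet_iff ?_ hkp1
    obtain ⟨j, hj⟩ := hu
    exact ⟨2 * N + 1 + j, by omega⟩
  have := hN k hkN
  rw [h1, h2] at this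
  rcases Nat.even_or_odd s with he | ho
  · exact (Nat.even_add_one.mp (this.mpr he)) he
  · exact (Nat.not_even_iff_odd.mpr ho) (this.mp (Nat.even_add_one.mpr
      (Nat.not_even_iff_odd.mpr ho)))

/-- **Aperiodicity.**  The set `S` of `k` congruent to `2^(n-1) - 1 mod 2^n`
for some odd `n` is not a finite union of arithmetic progressions
(`{a + d·m : m ∈ ℕ}`, singletons being the case `d = 0`); equivalently, its
indicator function is not eventually periodic: there is no period `p ≥ 1` and
threshold `N` such that for all `k ≥ N`, `k ∈ S` iff `k + p ∈ S`. -/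
theorem ultimatumDrawSet_aperiodic :
    (¬ ∃ I : Finset (ℕ × ℕ),
        ultimatumDrawSet = ⋃ p ∈ I, {k : ℕ | ∃ m : ℕ, k = p.1 + p.2 * m}) ∧
    (¬ ∃ p : ℕ, 1 ≤ p ∧ ∃ N : ℕ, ∀ k : ℕ, N ≤ k →
        (k ∈ ultimatumDrawSet ↔ k + p ∈ ultimatumDrawSet)) := by
  refine ⟨?_, ultimatumDrawSet_not_eventually_periodic⟩
  rintro ⟨I, hI⟩
  apply ultimatumDrawSet_not_eventually_periodic
  have hmem : ∀ k : ℕ, k ∈ ultimatumDrawSet ↔ ∃ q ∈ I, ∃ m : ℕ, k = q.1 + q.2 * m := by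
    intro k
    rw [hI]
    simp [Set.mem_iUnion]
  set P : ℕ := ∏ q ∈ I, max q.2 1 with hP
  have hP1 : 1 ≤ P := by
    apply Finset.one_le_prod'
    intro q _; omega
  have hdvd : ∀ q ∈ I, q.2 ≠ 0 → q.2 ∣ P := by
    intro q hq hq2
    have : max q.2 1 ∣ P := Finset.dvd_prod_of_mem _ hq
    rwa [max_eq_left (by omega)] at this
  set N : ℕ := (I.sup fun q => q.1) + 1 with hNdef
  refine ⟨P, hP1, N, fun k hk => ?_⟩
  constructor
  · intro hkS
    obtain ⟨q, hq, m, hm⟩ := (hmem k).mp hkS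
    have hq2 : q.2 ≠ 0 := by
      rintro h0
      rw [h0, zero_mul, add_zero] at hm
      have : q.1 ≤ I.sup fun q => q.1 := Finset.le_sup hq
      omega
    obtain ⟨t, ht⟩ := hdvd q hq hq2
    exact (hmem _).mpr ⟨q, hq, m + t, by rw [hm, ht]; ring⟩
  · intro hkS
    obtain ⟨q, hq, m, hm⟩ := (hmem (k + P)).mp hkS
    have hsup : q.1 ≤ I.sup fun q => q.1 := Finset.le_sup hq
    have hq2 : q.2 ≠ 0 := by
      rintro h0
      rw [h0, zero_mul, add_zero] at hm
      omega
    obtain ⟨t, ht⟩ := hdvd q hq hq2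
    have hmt : t ≤ m := by
      have h1 : q.2 * t ≤ q.2 * m := by omega
      exact Nat.le_of_mul_le_mul_left h1 (by omega)
    have hmul : q.2 * m = q.2 * t + q.2 * (m - t) := by
      rw [← Nat.mul_add, Nat.add_sub_cancel' hmt]
    exact (hmem k).mpr ⟨q, hq, m - t, by omega⟩
end
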